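/- Let B be an m × 3 complex matrix of rank 3, and suppose there exist a two-dimensional ℂ-subspace T of ℂ³ and a vector w ∉ T such that every row of B either lies in T or is a scalar multiple of w, and at least three pairwise non-proportional rows of B lie in T. Then there exists an injective ℂ-linear map C : (Fin 4 → ℂ) → (Fin m → ℂ) such that (fun x i => (x i)^2) '' {B.mulVec v | v : Fin 3 → ℂ} = C '' {y : Fin 4 → ℂ | (y 1)^2 + (y 2)^2 + (y 3)^2 − 2*(y 1)*(y 2) − 2*(y 2)*(y 3) − 2*(y 3)*(y 1) = 0}. (If all but one of the points of the point configuration of a plane lie on a line, and at least three do, the coordinate-wise square of the plane is a linearly re-embedded quadric surface, given by the stated rank-3 quadric in ℙ³.) -/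

import Mathlib

open Matrix

/-- Two vectors are non-proportional: neither is a scalar multiple of the other. -/
def NonProportional {m : ℕ} (x y : Fin m → ℂ) : Prop :=
  (∀ c : ℂ, x ≠ c • y) ∧ (∀ c : ℂ, y ≠ c • x)

/-- A binary quadratic form vanishing at three pairwise non-proportional points is zero. -/
lemma quad_vanish {a1 b1 a2 b2 a3 b3 z1 z2 z3 : ℂ}
    (d12 : a1 * b2 - a2 * b1 ≠ 0) (d13 : a1 * b3 - a3 * b1 ≠ 0)
    (d23 : a2 * b3 - a3 * b2 ≠ 0)
    (e1 : a1 ^ 2 * z1 + 2 * (a1 * b1) * z2 + b1 ^ 2 * z3 = 0)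
    (e2 : a2 ^ 2 * z1 + 2 * (a2 * b2) * z2 + b2 ^ 2 * z3 = 0)
    (e3 : a3 ^ 2 * z1 + 2 * (a3 * b3) * z2 + b3 ^ 2 * z3 = 0) :
    z1 = 0 ∧ z2 = 0 ∧ z3 = 0 := by
  have hD : (2 : ℂ) * (a1 * b2 - a2 * b1) * (a1 * b3 - a3 * b1) * (a2 * b3 - a3 * b2) ≠ 0 := by
    exact mul_ne_zero (mul_ne_zero (mul_ne_zero two_ne_zero d12) d13) d23
  refine ⟨?_, ?_, ?_⟩
  · have h : z1 * (2 * (a1 * b2 - a2 * b1) * (a1 * b3 - a3 * b1) * (a2 * b3 - a3 * b2)) = 0 := by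
      linear_combination (2 * b2 * b3 * (a2 * b3 - a3 * b2)) * e1
        - (2 * b1 * b3 * (a1 * b3 - a3 * b1)) * e2 + (2 * b1 * b2 * (a1 * b2 - a2 * b1)) * e3
    exact (mul_eq_zero.mp h).resolve_right hD
  · have h : z2 * (2 * (a1 * b2 - a2 * b1) * (a1 * b3 - a3 * b1) * (a2 * b3 - a3 * b2)) = 0 := by
      linear_combination (-(a2 * b3 + a3 * b2) * (a2 * b3 - a3 * b2)) * e1
        + ((a1 * b3 + a3 * b1) * (a1 * b3 - a3 * b1)) * e2
        - ((a1 * b2 + a2 * b1) * (a1 * b2 - a2 * b1)) * e3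
    exact (mul_eq_zero.mp h).resolve_right hD
  · have h : z3 * (2 * (a1 * b2 - a2 * b1) * (a1 * b3 - a3 * b1) * (a2 * b3 - a3 * b2)) = 0 := by
      linear_combination (2 * a2 * a3 * (a2 * b3 - a3 * b2)) * e1
        - (2 * a1 * a3 * (a1 * b3 - a3 * b1)) * e2 + (2 * a1 * a2 * (a1 * b2 - a2 * b1)) * e3
    exact (mul_eq_zero.mp h).resolve_right hD


/-- If all but one of the points of the point configuration of a plane lie on a line,
and at least three (pairwise distinct) of them do, then the coordinate-wise square of
the plane is a linear re-embedding of the quadric surface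
`y₁² + y₂² + y₃² − 2y₁y₂ − 2y₂y₃ − 2y₃y₁ = 0` in `ℙ³`. -/
theorem square_of_plane_points_on_line (m : ℕ) (B : Matrix (Fin m) (Fin 3) ℂ)
    (hrank : B.rank = 3) (T : Submodule ℂ (Fin 3 → ℂ))
    (hT : Module.finrank ℂ T = 2) (w : Fin 3 → ℂ) (hw : w ∉ T)
    (hrows : ∀ i, (fun j => B i j) ∈ T ∨ ∃ c : ℂ, (fun j => B i j) = c • w)
    (hthree : ∃ i j k : Fin m,
      (fun l => B i l) ∈ T ∧ (fun l => B j l) ∈ T ∧ (fun l => B k l) ∈ T ∧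
      NonProportional (fun l => B i l) (fun l => B j l) ∧
      NonProportional (fun l => B i l) (fun l => B k l) ∧
      NonProportional (fun l => B j l) (fun l => B k l)) :
    ∃ C : (Fin 4 → ℂ) →ₗ[ℂ] (Fin m → ℂ), Function.Injective C ∧
      (fun x : Fin m → ℂ => fun i => (x i) ^ 2) ''
          {y : Fin m → ℂ | ∃ v : Fin 3 → ℂ, y = B.mulVec v}
        = C '' {y : Fin 4 → ℂ |
            (y 1) ^ 2 + (y 2) ^ 2 + (y 3) ^ 2
              - 2 * (y 1) * (y 2) - 2 * (y 2) * (y 3) - 2 * (y 3) * (y 1) = 0} := by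
  classical
  -- a basis of T
  let t : Module.Basis (Fin 2) ℂ T := Module.finBasisOfFinrankEq ℂ T hT
  set t1 : Fin 3 → ℂ := ((t 0 : T) : Fin 3 → ℂ) with ht1
  set t2 : Fin 3 → ℂ := ((t 1 : T) : Fin 3 → ℂ) with ht2
  -- representation of elements of T
  have hrep : ∀ (x : Fin 3 → ℂ) (hx : x ∈ T),
      x = (t.repr ⟨x, hx⟩ 0) • t1 + (t.repr ⟨x, hx⟩ 1) • t2 := by
    intro x hx
    have := t.sum_repr ⟨x, hx⟩
    rw [Fin.sum_univ_two] at this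
    have h2 := congrArg (fun y : T => (y : Fin 3 → ℂ)) this
    simp only [Submodule.coe_add, SetLike.val_smul] at h2
    exact h2.symm
  -- span of the basis of T
  have hspanT : Submodule.span ℂ (Set.range fun i : Fin 2 => ((t i : T) : Fin 3 → ℂ)) = T := by
    have : (fun i : Fin 2 => ((t i : T) : Fin 3 → ℂ)) = T.subtype ∘ t := rfl
    rw [this, Set.range_comp, Submodule.span_image, t.span_eq, Submodule.map_subtype_top]
  -- the family (w, t1, t2) is linearly independent, thus spans ℂ³
  have hindep : LinearIndependent ℂ
      (Fin.cons w (fun i : Fin 2 => ((t i : T) : Fin 3 → ℂ)) : Fin 3 → Fin 3 → ℂ) := by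
    rw [linearIndependent_fin_cons]
    exact ⟨t.linearIndependent.map' T.subtype (Submodule.ker_subtype T),
      by rw [hspanT]; exact hw⟩
  have hspan : Submodule.span ℂ
      (Set.range (Fin.cons w (fun i : Fin 2 => ((t i : T) : Fin 3 → ℂ)) : Fin 3 → Fin 3 → ℂ))
      = ⊤ := by
    rw [← coe_basisOfLinearIndependentOfCardEqFinrank hindep (by simp)]
    exact (basisOfLinearIndependentOfCardEqFinrank hindep (by simp)).span_eq
  -- the coordinate map φ
  let φ : (Fin 3 → ℂ) →ₗ[ℂ] (Fin 3 → ℂ) :=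
    { toFun := fun v => ![t1 ⬝ᵥ v, t2 ⬝ᵥ v, w ⬝ᵥ v]
      map_add' := by
        intro u v; funext i; fin_cases i <;> simp [dotProduct_add]
      map_smul' := by
        intro c v; funext i; fin_cases i <;> simp [dotProduct_smul, smul_eq_mul] }
  have hφsurj : Function.Surjective φ := by
    rw [← LinearMap.injective_iff_surjective]
    rw [← LinearMap.ker_eq_bot, LinearMap.ker_eq_bot']
    intro v hv
    have h1 : t1 ⬝ᵥ v = 0 := congrFun hv 0
    have h2 : t2 ⬝ᵥ v = 0 := congrFun hv 1
    have h3 : w ⬝ᵥ v = 0 := congrFun hv 2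
    -- every vector pairs to zero with v
    let ψ : (Fin 3 → ℂ) →ₗ[ℂ] ℂ :=
      { toFun := fun x => x ⬝ᵥ v
        map_add' := fun a b => add_dotProduct a b v
        map_smul' := fun c a => smul_dotProduct c a v }
    have hker : Submodule.span ℂ
        (Set.range (Fin.cons w (fun i : Fin 2 => ((t i : T) : Fin 3 → ℂ)) : Fin 3 → Fin 3 → ℂ))
        ≤ LinearMap.ker ψ := by
      rw [Submodule.span_le]
      rintro x ⟨i, rfl⟩
      fin_cases i <;> simp only [Fin.cons_zero, Fin.cons_succ, LinearMap.mem_ker] <;>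
        first
          | exact h3
          | exact h1
          | exact h2
    rw [hspan] at hker
    funext j
    have hj : Pi.single j 1 ⬝ᵥ v = 0 := hker Submodule.mem_top
    rwa [single_dotProduct, one_mul] at hj
  -- choose coordinates for each row
  have key : ∀ i, ∃ a b c : ℂ, (∀ j, B i j = a * t1 j + b * t2 j + c * w j) ∧
      (((fun j => B i j) ∈ T ∧ c = 0) ∨ (a = 0 ∧ b = 0)) := by
    intro i
    by_cases h : (fun j => B i j) ∈ T
    · refine ⟨t.repr ⟨_, h⟩ 0, t.repr ⟨_, h⟩ 1, 0, ?_, Or.inl ⟨h, rfl⟩⟩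
      intro j
      have := congrFun (hrep _ h) j
      simpa using this
    · obtain ⟨c, hc⟩ := (hrows i).resolve_left h
      refine ⟨0, 0, c, ?_, Or.inr ⟨rfl, rfl⟩⟩
      intro j
      have := congrFun hc j
      simpa using this
  choose a b c hrow hside using key
  have hprod : ∀ i, a i * c i = 0 ∧ b i * c i = 0 := by
    intro i
    rcases hside i with ⟨-, hc⟩ | ⟨ha, hb⟩
    · simp [hc]
    · simp [ha, hb]
  -- the uniform formula for B.mulVec
  have hmul : ∀ (v : Fin 3 → ℂ) i,
      B.mulVec v i = a i * (t1 ⬝ᵥ v) + b i * (t2 ⬝ᵥ v) + c i * (w ⬝ᵥ v) := by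
    intro v i
    show (fun j => B i j) ⬝ᵥ v = _
    simp only [dotProduct]
    calc ∑ j, B i j * v j = ∑ j, (a i * t1 j + b i * t2 j + c i * w j) * v j := by
          refine Finset.sum_congr rfl fun j _ => ?_
          rw [hrow i j]
      _ = _ := by
          simp only [add_mul, Finset.sum_add_distrib, mul_assoc, ← Finset.mul_sum]
  -- the linear map L
  let L : (Fin 4 → ℂ) →ₗ[ℂ] (Fin m → ℂ) :=
    { toFun := fun z i => c i ^ 2 * z 0 + a i ^ 2 * z 1 + 2 * (a i * b i) * z 2 + b i ^ 2 * z 3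
      map_add' := by intro x y; funext i; simp [Pi.add_apply]; ring
      map_smul' := by intro r x; funext i; simp [Pi.smul_apply, smul_eq_mul]; ring }
  -- the square formula
  have hsq : ∀ (v : Fin 3 → ℂ) i,
      (B.mulVec v i) ^ 2
        = L ![(w ⬝ᵥ v) ^ 2, (t1 ⬝ᵥ v) ^ 2, (t1 ⬝ᵥ v) * (t2 ⬝ᵥ v), (t2 ⬝ᵥ v) ^ 2] i := by
    intro v i
    rw [hmul v i]
    show _ = c i ^ 2 * (w ⬝ᵥ v) ^ 2 + a i ^ 2 * (t1 ⬝ᵥ v) ^ 2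
        + 2 * (a i * b i) * ((t1 ⬝ᵥ v) * (t2 ⬝ᵥ v)) + b i ^ 2 * (t2 ⬝ᵥ v) ^ 2
    obtain ⟨h1, h2⟩ := hprod i
    linear_combination (2 * (t1 ⬝ᵥ v) * (w ⬝ᵥ v)) * h1 + (2 * (t2 ⬝ᵥ v) * (w ⬝ᵥ v)) * h2
  -- some row is not in T (else rank ≤ 2)
  have hex : ∃ i0, (fun j => B i0 j) ∉ T := by
    by_contra hall
    push_neg at hall
    have hle : Submodule.span ℂ (Set.range B) ≤ T := by
      rw [Submodule.span_le]
      rintro x ⟨i, rfl⟩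
      exact hall i
    have : B.rank ≤ 2 := by
      rw [Matrix.rank_eq_finrank_span_row]
      calc Module.finrank ℂ (Submodule.span ℂ (Set.range B))
          ≤ Module.finrank ℂ T := Submodule.finrank_mono hle
        _ = 2 := hT
    omega
  obtain ⟨i0, hi0⟩ := hex
  have hai0 : a i0 = 0 ∧ b i0 = 0 := by
    rcases hside i0 with ⟨h, -⟩ | h
    · exact absurd h hi0
    · exact h
  have hci0 : c i0 ≠ 0 := by
    intro h
    apply hi0
    have : (fun j => B i0 j) = 0 := by
      funext j
      rw [hrow i0 j, hai0.1, hai0.2, h]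
      simp
    rw [this]
    exact Submodule.zero_mem T
  -- rows in T that appear in a NonProportional pair have c = 0
  have hczero : ∀ p q : Fin m, (fun l => B p l) ∈ T →
      NonProportional (fun l => B p l) (fun l => B q l) → c p = 0 := by
    intro p q hp hnp
    rcases hside p with ⟨-, hc⟩ | ⟨ha, hb⟩
    · exact hc
    · exfalso
      by_cases hc : c p = 0
      · exact hnp.1 0 (by
          funext l
          show B p l = (0 : ℂ) • (fun l => B q l) l
          rw [hrow p l, ha, hb, hc]
          simp)
      · apply hw
        have hwp : w = (c p)⁻¹ • (fun l => B p l) := by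
          funext l
          show w l = (c p)⁻¹ * B p l
          rw [hrow p l, ha, hb]
          field_simp
          ring
        rw [hwp]
        exact Submodule.smul_mem T _ hp
  -- non-proportional rows in T have nonzero determinant of coordinates
  have hdet : ∀ p q : Fin m, c p = 0 → c q = 0 →
      NonProportional (fun l => B p l) (fun l => B q l) →
      a p * b q - a q * b p ≠ 0 := by
    intro p q hcp hcq hnp hd
    have hrp : ∀ l, B p l = a p * t1 l + b p * t2 l := by
      intro l; rw [hrow p l, hcp]; ring
    have hrq : ∀ l, B q l = a q * t1 l + b q * t2 l := by
      intro l; rw [hrow q l, hcq]; ring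
    by_cases hq0 : a q = 0 ∧ b q = 0
    · exact hnp.2 0 (by
        funext l
        show B q l = (0 : ℂ) • (fun l => B p l) l
        rw [hrq l, hq0.1, hq0.2]
        simp)
    · rcases not_and_or.mp hq0 with haq | hbq
      · -- a q ≠ 0
        exact hnp.1 (a p / a q) (by
          funext l
          show B p l = (a p / a q) * B q l
          rw [hrp l, hrq l]
          field_simp
          linear_combination (-(t2 l)) * hd)
      · exact hnp.1 (b p / b q) (by
          funext l
          show B p l = (b p / b q) * B q l
          rw [hrp l, hrq l]
          field_simp
          linear_combination (t1 l) * hd)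
  -- injectivity of L
  have hLinj : Function.Injective L := by
    rw [← LinearMap.ker_eq_bot, LinearMap.ker_eq_bot']
    intro z hz
    obtain ⟨p, q, r, hp, hq, hr, hpq, hpr, hqr⟩ := hthree
    have hcp : c p = 0 := hczero p q hp hpq
    have hcq : c q = 0 := hczero q r hq hqr
    have hcr : c r = 0 := hczero r q hr ⟨hqr.2, hqr.1⟩
    have h0 : z 0 = 0 := by
      have := congrFun hz i0
      simp only [L, LinearMap.coe_mk, AddHom.coe_mk, Pi.zero_apply] at this
      rw [hai0.1, hai0.2] at this
      have h2 : c i0 ^ 2 * z 0 = 0 := by linear_combination this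
      rcases mul_eq_zero.mp h2 with h | h
      · exact absurd (pow_eq_zero_iff two_ne_zero |>.mp h) hci0
      · exact h
    have heq : ∀ s : Fin m, c s = 0 →
        a s ^ 2 * z 1 + 2 * (a s * b s) * z 2 + b s ^ 2 * z 3 = 0 := by
      intro s hcs
      have := congrFun hz s
      simp only [L, LinearMap.coe_mk, AddHom.coe_mk, Pi.zero_apply] at this
      rw [hcs, h0] at this
      linear_combination this
    obtain ⟨h1, h2, h3⟩ := quad_vanish
      (hdet p q hcp hcq hpq) (hdet p r hcp hcr hpr) (hdet q r hcq hcr hqr)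
      (heq p hcp) (heq q hcq) (heq r hcr)
    funext idx
    fin_cases idx
    · exact h0
    · exact h1
    · exact h2
    · exact h3
  -- the change of coordinates M
  let M : (Fin 4 → ℂ) →ₗ[ℂ] (Fin 4 → ℂ) :=
    { toFun := fun y => ![y 0, y 1, (y 1 + y 2 - y 3) / 2, y 2]
      map_add' := by
        intro x y; funext i; fin_cases i <;> simp [Pi.add_apply] <;> ring
      map_smul' := by
        intro r x; funext i; fin_cases i <;> simp [Pi.smul_apply, smul_eq_mul] <;> ring }
  have hMinj : Function.Injective M := by
    intro x y h
    have h0 : x 0 = y 0 := congrFun h 0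
    have h1 : x 1 = y 1 := congrFun h 1
    have h2 : (x 1 + x 2 - x 3) / 2 = (y 1 + y 2 - y 3) / 2 := congrFun h 2
    have h3 : x 2 = y 2 := congrFun h 3
    funext i
    fin_cases i
    · exact h0
    · exact h1
    · exact h3
    · show x 3 = y 3
      linear_combination h1 + h3 - 2 * h2
  have himM : M '' {y : Fin 4 → ℂ |
        (y 1) ^ 2 + (y 2) ^ 2 + (y 3) ^ 2
          - 2 * (y 1) * (y 2) - 2 * (y 2) * (y 3) - 2 * (y 3) * (y 1) = 0}
      = {z : Fin 4 → ℂ | z 2 ^ 2 = z 1 * z 3} := by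
    ext z
    constructor
    · rintro ⟨y, hy, rfl⟩
      show ((y 1 + y 2 - y 3) / 2) ^ 2 = y 1 * y 2
      have hy' : (y 1) ^ 2 + (y 2) ^ 2 + (y 3) ^ 2
          - 2 * (y 1) * (y 2) - 2 * (y 2) * (y 3) - 2 * (y 3) * (y 1) = 0 := hy
      linear_combination (1 / 4 : ℂ) * hy'
    · intro hzK
      have hzK' : z 2 ^ 2 = z 1 * z 3 := hzK
      refine ⟨![z 0, z 1, z 3, z 1 + z 3 - 2 * z 2], ?_, ?_⟩
      · show (z 1) ^ 2 + (z 3) ^ 2 + (z 1 + z 3 - 2 * z 2) ^ 2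
            - 2 * (z 1) * (z 3) - 2 * (z 3) * (z 1 + z 3 - 2 * z 2)
            - 2 * (z 1 + z 3 - 2 * z 2) * (z 1) = 0
        linear_combination 4 * hzK'
      · funext i
        fin_cases i
        · rfl
        · rfl
        · show (z 1 + z 3 - (z 1 + z 3 - 2 * z 2)) / 2 = z 2
          ring
        · rfl
  refine ⟨L.comp M, hLinj.comp hMinj, ?_⟩
  rw [LinearMap.coe_comp, Set.image_comp, himM]
  ext x
  constructor
  · rintro ⟨y, ⟨v, rfl⟩, rfl⟩
    refine ⟨![(w ⬝ᵥ v) ^ 2, (t1 ⬝ᵥ v) ^ 2, (t1 ⬝ᵥ v) * (t2 ⬝ᵥ v), (t2 ⬝ᵥ v) ^ 2], ?_, ?_⟩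
    · show ((t1 ⬝ᵥ v) * (t2 ⬝ᵥ v)) ^ 2 = (t1 ⬝ᵥ v) ^ 2 * (t2 ⬝ᵥ v) ^ 2
      ring
    · funext i
      exact (hsq v i).symm
  · rintro ⟨z, hzK, rfl⟩
    have hz : z 2 ^ 2 = z 1 * z 3 := hzK
    obtain ⟨u, hu⟩ := IsAlgClosed.exists_pow_nat_eq (z 0) (n := 2) two_pos
    obtain ⟨s, t', hs, hst, ht'⟩ : ∃ s t' : ℂ, s ^ 2 = z 1 ∧ s * t' = z 2 ∧ t' ^ 2 = z 3 := by
      by_cases h1 : z 1 = 0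
      · have h2 : z 2 = 0 := by
          have : z 2 ^ 2 = 0 := by rw [hz, h1, zero_mul]
          exact pow_eq_zero_iff two_ne_zero |>.mp this
        obtain ⟨t', ht'⟩ := IsAlgClosed.exists_pow_nat_eq (z 3) (n := 2) two_pos
        exact ⟨0, t', by simp [h1], by simp [h2], ht'⟩
      · obtain ⟨s, hs⟩ := IsAlgClosed.exists_pow_nat_eq (z 1) (n := 2) two_pos
        have hs0 : s ≠ 0 := by
          intro h
          rw [h] at hs
          simp at hs
          exact h1 hs.symm
        refine ⟨s, z 2 / s, hs, ?_, ?_⟩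
        · field_simp
        · field_simp
          linear_combination hz - z 3 * hs
    obtain ⟨v, hv⟩ := hφsurj ![s, t', u]
    have hv1 : t1 ⬝ᵥ v = s := congrFun hv 0
    have hv2 : t2 ⬝ᵥ v = t' := congrFun hv 1
    have hv3 : w ⬝ᵥ v = u := congrFun hv 2
    refine ⟨B.mulVec v, ⟨v, rfl⟩, ?_⟩
    have hvec : ![(w ⬝ᵥ v) ^ 2, (t1 ⬝ᵥ v) ^ 2, (t1 ⬝ᵥ v) * (t2 ⬝ᵥ v), (t2 ⬝ᵥ v) ^ 2] = z := by
      funext idx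
      fin_cases idx
      · show (w ⬝ᵥ v) ^ 2 = z 0
        rw [hv3, hu]
      · show (t1 ⬝ᵥ v) ^ 2 = z 1
        rw [hv1, hs]
      · show (t1 ⬝ᵥ v) * (t2 ⬝ᵥ v) = z 2
        rw [hv1, hv2, hst]
      · show (t2 ⬝ᵥ v) ^ 2 = z 3
        rw [hv2, ht']
    funext i
    show (B.mulVec v i) ^ 2 = L z i
    rw [hsq v i, hvec]
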